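/- Let p, n be natural numbers, let σ and σ' be types of variables, and let w : Fin p → MvPolynomial σ ℝ and r : Fin p → Fin p → MvPolynomial σ ℝ with r symmetric (r i j = r j i), and similarly w' : Fin p → MvPolynomial σ' ℝ, r' : Fin p → Fin p → MvPolynomial σ' ℝ with r' symmetric. Suppose there exist a bijection f : Fin p ≃ Fin p and a bijection of variables g : σ ≃ σ' such that w' i = rename g (w (f i)) for all i and r' i j = rename g (r (f i) (f j)) for all i, j. Then F(n, w', r') = rename g (F(n, w, r)), where F is the WFOMC sum computed in the polynomial ring. In particular, for every monomial m over σ, the coefficient of the g-renamed monomial in F(n, w', r') equals the coefficient of m in F(n, w, r), so two C² sentences whose cell graphs with cardinality constraints are isomorphic have equal weighted first-order model counts on every domain size. -/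

import Mathlib

open Finset

/-- The WFOMC sum determined by a cell graph with vertex weights `w` and edge weights `r`,
valued in a commutative ring `R`. -/
noncomputable def wfomcSum {R : Type*} [CommRing R] (p n : ℕ)
    (w : Fin p → R) (r : Fin p → Fin p → R) : R :=
  ∑ k ∈ Finset.Nat.antidiagonalTuple p n,
    (Nat.multinomial Finset.univ k : R) *
      (∏ ij ∈ Finset.univ.filter fun ij : Fin p × Fin p => ij.1 < ij.2,
        r ij.1 ij.2 ^ (k ij.1 * k ij.2)) *
      (∏ i, r i i ^ (k i).choose 2) * (∏ i, w i ^ k i)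

lemma pairprod {R : Type*} [CommRing R] {p : ℕ} (r : Fin p → Fin p → R)
    (hr : ∀ i j, r i j = r j i) (f : Fin p ≃ Fin p) (k : Fin p → ℕ) :
    (∏ ij ∈ Finset.univ.filter fun ij : Fin p × Fin p => ij.1 < ij.2,
      r (f ij.1) (f ij.2) ^ (k (f ij.1) * k (f ij.2))) =
    ∏ ij ∈ Finset.univ.filter fun ij : Fin p × Fin p => ij.1 < ij.2,
      r ij.1 ij.2 ^ (k ij.1 * k ij.2) := by
  refine Finset.prod_nbij' (fun ij => if f ij.1 < f ij.2 then (f ij.1, f ij.2) else (f ij.2, f ij.1))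
    (fun ij => if f.symm ij.1 < f.symm ij.2 then (f.symm ij.1, f.symm ij.2) else (f.symm ij.2, f.symm ij.1))
    ?_ ?_ ?_ ?_ ?_
  · rintro ⟨i, j⟩ h
    simp only [mem_filter, mem_univ, true_and] at h ⊢
    have hne : f i ≠ f j := fun hh => h.ne (f.injective hh)
    split_ifs with h1
    · exact h1
    · exact lt_of_le_of_ne (not_lt.mp h1) (Ne.symm hne)
  · rintro ⟨i, j⟩ h
    simp only [mem_filter, mem_univ, true_and] at h ⊢
    have hne : f.symm i ≠ f.symm j := fun hh => h.ne (f.symm.injective hh)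
    split_ifs with h1
    · exact h1
    · exact lt_of_le_of_ne (not_lt.mp h1) (Ne.symm hne)
  · rintro ⟨i, j⟩ h
    simp only [mem_filter, mem_univ, true_and] at h
    dsimp only
    split_ifs with h1 h2 h2 <;>
      simp_all [Prod.ext_iff, Equiv.symm_apply_apply] <;> omega
  · rintro ⟨i, j⟩ h
    simp only [mem_filter, mem_univ, true_and] at h
    dsimp only
    split_ifs with h1 h2 h2 <;>
      simp_all [Prod.ext_iff, Equiv.apply_symm_apply] <;> omega
  · rintro ⟨i, j⟩ h
    dsimp only
    split_ifs with h1 <;> simp [hr (f j) (f i), Nat.mul_comm]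

lemma wfomcSum_perm {R : Type*} [CommRing R] (p n : ℕ)
    (w : Fin p → R) (r : Fin p → Fin p → R) (hr : ∀ i j, r i j = r j i)
    (f : Fin p ≃ Fin p) :
    wfomcSum p n (fun i => w (f i)) (fun i j => r (f i) (f j)) = wfomcSum p n w r := by
  unfold wfomcSum
  refine Finset.sum_nbij' (fun k => k ∘ f.symm) (fun k => k ∘ f) ?_ ?_ ?_ ?_ ?_
  · intro k hk
    rw [Finset.Nat.mem_antidiagonalTuple] at hk ⊢
    rw [← hk]
    exact Fintype.sum_equiv f.symm _ _ (fun i => rfl)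
  · intro k hk
    rw [Finset.Nat.mem_antidiagonalTuple] at hk ⊢
    rw [← hk]
    exact Fintype.sum_equiv f _ _ (fun i => rfl)
  · intro k _; funext i; simp
  · intro k _; funext i; simp
  · intro k _
    dsimp only
    have h1 : Nat.multinomial Finset.univ (k ∘ f.symm) = Nat.multinomial Finset.univ k := by
      simp only [Nat.multinomial]
      rw [Fintype.sum_equiv f.symm (fun i => (k ∘ f.symm) i) k (fun i => rfl),
        Fintype.prod_equiv f.symm (fun i => ((k ∘ f.symm) i).factorial) (fun i => (k i).factorial)
          (fun i => rfl)]
    have h2 := pairprod r hr f (k ∘ f.symm)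
    simp only [Function.comp, Equiv.symm_apply_apply] at h2
    rw [h1, h2]
    congr 1
    · congr 1
      exact Fintype.prod_equiv f _ _ (fun i => by simp)
    · exact Fintype.prod_equiv f _ _ (fun i => by simp)

lemma wfomcSum_rename {σ σ' : Type*} (p n : ℕ) (g : σ ≃ σ')
    (w : Fin p → MvPolynomial σ ℝ) (r : Fin p → Fin p → MvPolynomial σ ℝ) :
    MvPolynomial.rename g (wfomcSum p n w r) =
      wfomcSum p n (fun i => MvPolynomial.rename g (w i))
        (fun i j => MvPolynomial.rename g (r i j)) := by
  unfold wfomcSum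
  simp only [map_sum, map_mul, map_prod, map_pow, map_natCast]

theorem wfomc_eq_of_symbolic_cellGraph_iso {σ σ' : Type*} (p n : ℕ)
    (w : Fin p → MvPolynomial σ ℝ) (r : Fin p → Fin p → MvPolynomial σ ℝ)
    (w' : Fin p → MvPolynomial σ' ℝ) (r' : Fin p → Fin p → MvPolynomial σ' ℝ)
    (hr : ∀ i j, r i j = r j i) (hr' : ∀ i j, r' i j = r' j i)
    (f : Fin p ≃ Fin p) (g : σ ≃ σ')
    (hw : ∀ i, w' i = MvPolynomial.rename g (w (f i)))
    (hrr : ∀ i j, r' i j = MvPolynomial.rename g (r (f i) (f j))) :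
    wfomcSum p n w' r' = MvPolynomial.rename g (wfomcSum p n w r) ∧
      ∀ m : σ →₀ ℕ,
        MvPolynomial.coeff (Finsupp.mapDomain (⇑g) m) (wfomcSum p n w' r') =
          MvPolynomial.coeff m (wfomcSum p n w r) := by
  have hmain : wfomcSum p n w' r' = MvPolynomial.rename g (wfomcSum p n w r) := by
    rw [wfomcSum_rename]
    have : w' = fun i => MvPolynomial.rename g (w (f i)) := funext hw
    rw [this, funext fun i => funext fun j => hrr i j]
    exact wfomcSum_perm p n (fun i => MvPolynomial.rename g (w i))
      (fun i j => MvPolynomial.rename g (r i j)) (fun i j => by rw [hr i j]) f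
  refine ⟨hmain, fun m => ?_⟩
  rw [hmain]
  exact MvPolynomial.coeff_rename_mapDomain g g.injective _ m
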